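/- Let α ∈ ω+1, let M be a model of Univ_α, let A be a finite set of vertices of M with A ≤* M, and let B ∈ K_α with A ⊆ B and A ≤* B. Then there exists an embedding f of the graph B into M fixing A pointwise such that the image f(B) is closed in M (f(B) ≤* M). In particular, every model of Univ_α is ultra-homogeneous. -/

import Mathlib

open SimpleGraph

/-- The predimension of a finite set `A` of vertices: `|A| - e(A)`, where `e(A)` is the
number of edges of the induced subgraph on `A`. -/
noncomputable def delta {V : Type*} (G : SimpleGraph V) (A : Finset V) : ℤ :=
  (A.card : ℤ) - (Nat.card (G.induce (A : Set V)).edgeSet : ℤ)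

/-- `A` is closed in `B` (`A ≤* B`): `A ⊆ B` and `δ(C) > δ(A)` for every finite `C` with
`A ⊊ C ⊆ B`. -/
def Closed {V : Type*} (G : SimpleGraph V) (A B : Finset V) : Prop :=
  A ⊆ B ∧ ∀ C : Finset V, A ⊂ C → C ⊆ B → delta G A < delta G C

/-- `A` is weakly closed in `B` (`A ≤ B`). -/
def WClosed {V : Type*} (G : SimpleGraph V) (A B : Finset V) : Prop :=
  A ⊆ B ∧ ∀ C : Finset V, A ⊆ C → C ⊆ B → delta G A ≤ delta G C

/-- `A ≤* M` : `A` is closed in every finite superset inside the graph. -/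
def ClosedIn {V : Type*} (G : SimpleGraph V) (A : Finset V) : Prop :=
  ∀ B : Finset V, A ⊆ B → Closed G A B

def WClosedIn {V : Type*} (G : SimpleGraph V) (A : Finset V) : Prop :=
  ∀ B : Finset V, A ⊆ B → WClosed G A B

/-- `(A,B)` is a minimal pair. -/
def MinPair {V : Type*} (G : SimpleGraph V) (A B : Finset V) : Prop :=
  A ⊆ B ∧ (∀ C : Finset V, A ⊆ C → C ⊂ B → Closed G A C) ∧ ¬ Closed G A B

def WMinPair {V : Type*} (G : SimpleGraph V) (A B : Finset V) : Prop :=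
  A ⊆ B ∧ (∀ C : Finset V, A ⊆ C → C ⊂ B → WClosed G A C) ∧ ¬ WClosed G A B

/-- `B` is an intrinsic extension of `A`. -/
def IntrinsicExt {V : Type*} (G : SimpleGraph V) (A B : Finset V) : Prop :=
  A ⊆ B ∧ ∀ C : Finset V, A ⊆ C → C ⊂ B → ¬ Closed G C B

def WIntrinsicExt {V : Type*} (G : SimpleGraph V) (A B : Finset V) : Prop :=
  A ⊆ B ∧ ∀ C : Finset V, A ⊆ C → C ⊂ B → ¬ WClosed G C B

/-- The closure `cl*_M(N)`. -/
def clStar {V : Type*} (G : SimpleGraph V) (N : Set V) : Set V :=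
  {b | ∃ A E : Finset V, (A : Set V) ⊆ N ∧ IntrinsicExt G A E ∧ b ∈ E}

/-- The weak closure `cl_M(N)`. -/
def clWeak {V : Type*} (G : SimpleGraph V) (N : Set V) : Set V :=
  {b | ∃ A E : Finset V, (A : Set V) ⊆ N ∧ WIntrinsicExt G A E ∧ b ∈ E}

/-- Membership of the finite induced subgraph on `A` in the class `K_α`, for
`α ∈ ω + 1` (coded as `α : ℕ∞`, where `⊤` codes `ω`):
* every nonempty subset has positive predimension (i.e. it is a forest); and
* if `α = n` with `1 ≤ n < ω`: no vertex having at least `n + 2` neighbours in `A` is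
  the starting point of a path of length `2n + 1` inside `A`;
* if `α = 0`: every vertex has at most `3` neighbours in `A`;
* if `α = ω`: no further condition. -/
def InK {V : Type*} (α : ℕ∞) (G : SimpleGraph V) (A : Finset V) : Prop :=
  (∀ S : Finset V, S ⊆ A → S.Nonempty → 0 < delta G S) ∧
  ∀ n : ℕ, α = (n : ℕ∞) →
    if n = 0 then
      ∀ a ∈ A, ∀ s : Finset V, s ⊆ A → (∀ b ∈ s, G.Adj a b) → s.card ≤ 3
    else
      ∀ a ∈ A, (∃ s : Finset V, s ⊆ A ∧ (∀ b ∈ s, G.Adj a b) ∧ n + 2 ≤ s.card) →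
        ¬ ∃ (y : V) (p : G.Walk a y),
            p.IsPath ∧ p.length = 2 * n + 1 ∧ ∀ v ∈ p.support, v ∈ A

/-- `G` is (semantically) a model of the theory `Univ_α` (`α ∈ ω + 1`, coded as
`α : ℕ∞` with `⊤` coding `ω`): the edge relation is symmetric and irreflexive (it is
a simple graph) with no cycle of any finite length; the defining degree/path axiom of
`K_α` holds; and for every finite graph `H ∈ K_α` (with `|H| = m`) the sentence
`∃x̄(diag_H(x̄) ∧ γ*_m(x̄))` holds, i.e. there is an induced copy of `H` in `G` no
vertex of which has a neighbour outside the copy. -/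
def ModelsUniv {V : Type*} (α : ℕ∞) (G : SimpleGraph V) : Prop :=
  G.IsAcyclic ∧
  (∀ n : ℕ, α = (n : ℕ∞) →
    if n = 0 then
      ∀ a : V, ∀ s : Finset V, (∀ b ∈ s, G.Adj a b) → s.card ≤ 3
    else
      ∀ a : V, (∃ s : Finset V, (∀ b ∈ s, G.Adj a b) ∧ n + 2 ≤ s.card) →
        ¬ ∃ (y : V) (p : G.Walk a y), p.IsPath ∧ p.length = 2 * n + 1) ∧
  ∀ (k : ℕ) (H : SimpleGraph (Fin k)), InK α H Finset.univ →
    ∃ f : Fin k → V, Function.Injective f ∧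
      (∀ u v : Fin k, H.Adj u v ↔ G.Adj (f u) (f v)) ∧
      ∀ y : V, y ∉ Set.range f → ∀ u : Fin k, ¬ G.Adj (f u) y


section Helpers
variable {V : Type*} {V' : Type*}


/-- The set of edges of `G` with both endpoints in `S`. -/
def Es (G : SimpleGraph V) (S : Set V) : Set (Sym2 V) :=
  {e | e ∈ G.edgeSet ∧ ∀ v ∈ e, v ∈ S}

lemma Es_finite (G : SimpleGraph V) {S : Set V} (hS : S.Finite) : (Es G S).Finite := by
  apply Set.Finite.subset ((hS.prod hS).image (fun p => s(p.1, p.2)))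
  rintro e ⟨he, hv⟩
  induction e with
  | _ x y => exact ⟨(x, y), ⟨hv x (by simp), hv y (by simp)⟩, rfl⟩

lemma card_induce_edgeSet (G : SimpleGraph V) (S : Set V) :
    Nat.card (G.induce S).edgeSet = (Es G S).ncard := by
  rw [← Nat.card_coe_set_eq]
  apply Nat.card_eq_of_bijective (fun e => ⟨Sym2.map Subtype.val e.val, by
    obtain ⟨e, he⟩ := e
    induction e with
    | _ x y =>
      refine ⟨he, ?_⟩
      intro v hv
      rw [Sym2.map_pair_eq, Sym2.mem_iff] at hv
      rcases hv with h | h <;> subst h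
      · exact x.2
      · exact y.2⟩)
  constructor
  · rintro ⟨e₁, he₁⟩ ⟨e₂, he₂⟩ h
    simp only [Subtype.mk.injEq] at h ⊢
    exact Sym2.map.injective Subtype.val_injective h
  · rintro ⟨e, he, hv⟩
    induction e with
    | _ x y =>
      exact ⟨⟨s(⟨x, hv x (by simp)⟩, ⟨y, hv y (by simp)⟩), he⟩, rfl⟩

lemma delta_eq (G : SimpleGraph V) (A : Finset V) :
    delta G A = (A.card : ℤ) - ((Es G (A : Set V)).ncard : ℤ) := by
  rw [delta, card_induce_edgeSet]

lemma Es_mono (G : SimpleGraph V) {S T : Set V} (h : S ⊆ T) : Es G S ⊆ Es G T :=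
  fun _ he => ⟨he.1, fun v hv => h (he.2 v hv)⟩

lemma Es_pair_mem (G : SimpleGraph V) {S : Set V} {x y : V} (he : G.Adj x y)
    (hx : x ∈ S) (hy : y ∈ S) : s(x, y) ∈ Es G S := by
  refine ⟨he, fun v hv => ?_⟩
  rcases Sym2.mem_iff.1 hv with h | h <;> subst h <;> assumption

lemma delta_union (G : SimpleGraph V) [DecidableEq V] (A B : Finset V) (hd : Disjoint A B)
    (hcross : ∀ a ∈ A, ∀ b ∈ B, ¬ G.Adj a b) :
    delta G (A ∪ B) = delta G A + delta G B := by
  have hsets : Es G ((A ∪ B : Finset V) : Set V) = Es G A ∪ Es G B := by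
    ext e
    induction e with
    | _ x y =>
      constructor
      · rintro ⟨he, hv⟩
        have hx := hv x (by simp); have hy := hv y (by simp)
        simp only [Finset.coe_union, Set.mem_union, Finset.mem_coe] at hx hy
        rcases hx with hx | hx <;> rcases hy with hy | hy
        · exact Or.inl (Es_pair_mem G he hx hy)
        · exact absurd he (hcross x hx y hy)
        · exact absurd (he.symm) (hcross y hy x hx)
        · exact Or.inr (Es_pair_mem G he hx hy)
      · rintro (⟨he, hv⟩ | ⟨he, hv⟩)
        · exact ⟨he, fun v hvv => by
            simp only [Finset.coe_union, Set.mem_union]; exact Or.inl (hv v hvv)⟩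
        · exact ⟨he, fun v hvv => by
            simp only [Finset.coe_union, Set.mem_union]; exact Or.inr (hv v hvv)⟩
  have hdisj : Disjoint (Es G (A : Set V)) (Es G (B : Set V)) := by
    rw [Set.disjoint_left]
    rintro e ⟨he, hvA⟩ ⟨_, hvB⟩
    induction e with
    | _ x y =>
      exact Finset.disjoint_left.1 hd (hvA x (by simp)) (hvB x (by simp))
  have hcard : (Es G ((A ∪ B : Finset V) : Set V)).ncard
      = (Es G (A : Set V)).ncard + (Es G (B : Set V)).ncard := by
    rw [hsets]
    exact Set.ncard_union_eq hdisj (Es_finite G (A : Set V).toFinite)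
      (Es_finite G (B : Set V).toFinite)
  rw [delta_eq, delta_eq, delta_eq, hcard, Finset.card_union_of_disjoint hd]
  push_cast
  ring



lemma Es_ncard_lt [DecidableEq V] {G : SimpleGraph V} (hG : G.IsAcyclic) :
    ∀ (n : ℕ) (S : Finset V), S.card ≤ n → S.Nonempty → (Es G (S : Set V)).ncard < S.card := by
  intro n
  induction n with
  | zero => intro S hle hne; simp [Finset.card_eq_zero.1 (Nat.le_zero.1 hle)] at hne
  | succ n ih =>
    intro S hle hne
    classical
    by_cases hE : Es G (S : Set V) = ∅
    · rw [hE]; simpa [Set.ncard_empty] using Finset.card_pos.2 hne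
    · obtain ⟨e, he⟩ := Set.nonempty_iff_ne_empty.2 hE
      induction e with
      | _ a b =>
        obtain ⟨hab, hvS⟩ := he
        rw [SimpleGraph.mem_edgeSet] at hab
        have haS : a ∈ S := hvS a (by simp)
        have hbS : b ∈ S := hvS b (by simp)
        -- maximal path machinery
        set P : ℕ → Prop := fun m => ∃ (x y : V) (w : G.Walk x y),
          w.IsPath ∧ (∀ v ∈ w.support, v ∈ S) ∧ w.length = m with hP
        have hsuplen : ∀ (x y : V) (w : G.Walk x y), w.IsPath →
            (∀ v ∈ w.support, v ∈ S) → w.length + 1 ≤ S.card := by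
          intro x y w hw hsub
          have h1 : w.support.toFinset.card = w.support.length :=
            List.toFinset_card_of_nodup hw.support_nodup
          have h2 : w.support.toFinset ⊆ S := fun v hv => hsub v (List.mem_toFinset.1 hv)
          have := Finset.card_le_card h2
          rw [h1, SimpleGraph.Walk.length_support] at this
          exact this
        have hP1 : P 1 := by
          refine ⟨a, b, SimpleGraph.Walk.cons hab SimpleGraph.Walk.nil, ?_, ?_, rfl⟩
          · rw [SimpleGraph.Walk.cons_isPath_iff]
            exact ⟨SimpleGraph.Walk.IsPath.nil, by simp [hab.ne]⟩
          · intro v hv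
            simp only [SimpleGraph.Walk.support_cons, SimpleGraph.Walk.support_nil,
              List.mem_cons, List.mem_singleton] at hv
            rcases hv with h | h | h
            · exact h ▸ haS
            · exact h ▸ hbS
            · simp at h
        have h1card : 1 ≤ S.card := Finset.card_pos.2 hne
        set L := Nat.findGreatest P S.card with hLdef
        have hL1 : 1 ≤ L := Nat.le_findGreatest h1card hP1
        have hPL : P L := Nat.findGreatest_spec h1card hP1
        obtain ⟨x, v, p, hp, hpS, hplen⟩ := hPL
        -- q : walk from endpoint v
        set q := p.reverse with hq
        have hqp : q.IsPath := hp.reverse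
        have hqS : ∀ u ∈ q.support, u ∈ S := by
          intro u hu
          rw [hq, SimpleGraph.Walk.support_reverse, List.mem_reverse] at hu
          exact hpS u hu
        have hqlen : q.length = L := by rw [hq, SimpleGraph.Walk.length_reverse, hplen]
        -- key: any S-neighbor of v is the second vertex of q
        have hkey : ∀ u, u ∈ S → G.Adj v u → q.support.tail.head? = some u := by
          intro u huS hadj
          by_cases hmem : u ∈ q.support
          · -- takeUntil gives a path v → u; path uniqueness forces it to be the edge
            have hr : (q.takeUntil u hmem).IsPath := hqp.takeUntil hmem
            have he' : (SimpleGraph.Walk.cons hadj SimpleGraph.Walk.nil : G.Walk v u).IsPath := by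
              rw [SimpleGraph.Walk.cons_isPath_iff]
              exact ⟨SimpleGraph.Walk.IsPath.nil, by simp [hadj.ne]⟩
            have hun := hG.path_unique ⟨q.takeUntil u hmem, hr⟩ ⟨_, he'⟩
            have hval : q.takeUntil u hmem = SimpleGraph.Walk.cons hadj SimpleGraph.Walk.nil :=
              congrArg Subtype.val hun
            have hspec := q.take_spec hmem
            have : q.support = (q.takeUntil u hmem).support
                ++ (q.dropUntil u hmem).support.tail := by
              rw [← SimpleGraph.Walk.support_append, hspec]
            rw [hval] at this
            simp only [SimpleGraph.Walk.support_cons, SimpleGraph.Walk.support_nil] at this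
            rw [this]
            rfl
          · -- extend the path: contradiction with maximality
            exfalso
            have hw' : (SimpleGraph.Walk.cons hadj.symm q).IsPath := by
              rw [SimpleGraph.Walk.cons_isPath_iff]; exact ⟨hqp, hmem⟩
            have hw'S : ∀ z ∈ (SimpleGraph.Walk.cons hadj.symm q).support, z ∈ S := by
              intro z hz
              rw [SimpleGraph.Walk.support_cons, List.mem_cons] at hz
              rcases hz with h | h
              · exact h ▸ huS
              · exact hqS z h
            have hbound := hsuplen _ _ _ hw' hw'S
            rw [SimpleGraph.Walk.length_cons, hqlen] at hbound
            have : L + 1 ≤ L :=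
              Nat.le_findGreatest (by omega) ⟨_, _, _, hw', hw'S, by rw [SimpleGraph.Walk.length_cons, hqlen]⟩
            omega
        -- v ∈ S
        have hvS' : v ∈ S := hqS v q.start_mem_support
        clear_value q
        clear hq
        cases q with
        | nil => rw [SimpleGraph.Walk.length_nil] at hqlen; omega
        | cons h' q'' =>
          rename_i u₀
          have hu₀ : ∀ u, u ∈ S → G.Adj v u → u = u₀ := by
            intro u huS hadj
            have h1 := hkey u huS hadj
            rw [SimpleGraph.Walk.support_cons] at h1
            rw [q''.support_eq_cons] at h1
            have h2 : u₀ = u := by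
              simp only [List.tail_cons, List.head?_cons, Option.some.injEq] at h1; exact h1
            exact h2.symm
          set T := S.erase v with hT
          have hsub : Es G (S : Set V) ⊆ insert s(v, u₀) (Es G (T : Set V)) := by
            rintro e ⟨hee, hev⟩
            induction e with
            | _ z w =>
              rw [SimpleGraph.mem_edgeSet] at hee
              have hzS : z ∈ S := hev z (by simp)
              have hwS : w ∈ S := hev w (by simp)
              by_cases hz : z = v
              · subst hz
                have : w = u₀ := hu₀ w hwS hee
                subst this
                exact Set.mem_insert _ _
              · by_cases hw : w = v
                · subst hw
                  have : z = u₀ := hu₀ z hzS hee.symm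
                  subst this
                  refine Set.mem_insert_iff.2 (Or.inl ?_)
                  exact Sym2.eq_swap
                · refine Set.mem_insert_iff.2 (Or.inr ⟨by simpa using hee, ?_⟩)
                  intro z' hz'
                  rcases Sym2.mem_iff.1 hz' with rfl | rfl
                  · exact Finset.mem_coe.2 (Finset.mem_erase.2 ⟨hz, hzS⟩)
                  · exact Finset.mem_coe.2 (Finset.mem_erase.2 ⟨hw, hwS⟩)
          have hTcard : T.card = S.card - 1 := Finset.card_erase_of_mem hvS'
          have hTne : T.Nonempty := by
            rw [← Finset.card_pos, hTcard]
            have h2 : 1 < S.card := Finset.one_lt_card.2 ⟨a, haS, b, hbS, hab.ne⟩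
            omega
          have hIH : (Es G (T : Set V)).ncard < T.card := ih T (by omega) hTne
          have hfin : (insert s(v, u₀) (Es G (T : Set V))).Finite :=
            (Es_finite G (T : Set V).toFinite).insert _
          calc (Es G (S : Set V)).ncard ≤ (insert s(v, u₀) (Es G (T : Set V))).ncard :=
                Set.ncard_le_ncard hsub hfin
            _ ≤ (Es G (T : Set V)).ncard + 1 := Set.ncard_insert_le _ _
            _ < S.card := by omega

lemma delta_pos_of_acyclic [DecidableEq V] {G : SimpleGraph V} (hG : G.IsAcyclic)
    (S : Finset V) (hS : S.Nonempty) : 0 < delta G S := by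
  rw [delta_eq]
  have := Es_ncard_lt hG S.card S le_rfl hS
  omega

lemma delta_insert_le [DecidableEq V] (G : SimpleGraph V) {A : Finset V} {v a : V}
    (hv : v ∉ A) (ha : a ∈ A) (hadj : G.Adj v a) : delta G (insert v A) ≤ delta G A := by
  have hsub : insert s(v, a) (Es G (A : Set V)) ⊆ Es G ((insert v A : Finset V) : Set V) := by
    rintro e (rfl | he)
    · exact Es_pair_mem G hadj (by simp) (by simp [ha])
    · exact Es_mono G (by simp [Finset.coe_insert, Set.subset_insert]) he
  have hne : s(v, a) ∉ Es G (A : Set V) := by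
    rintro ⟨_, hmem⟩
    exact hv (hmem v (by simp))
  have hfin : (Es G ((insert v A : Finset V) : Set V)).Finite :=
    Es_finite G ((insert v A : Finset V) : Set V).toFinite
  have hcard : (Es G (A : Set V)).ncard + 1 ≤ (Es G ((insert v A : Finset V) : Set V)).ncard := by
    have h1 := Set.ncard_le_ncard hsub hfin
    rwa [Set.ncard_insert_of_notMem hne (Es_finite G (A : Set V).toFinite)] at h1
  rw [delta_eq, delta_eq, Finset.card_insert_of_notMem hv]
  simp only [Finset.coe_insert] at hcard ⊢
  push_cast
  omega

lemma not_adj_of_closed [DecidableEq V] {G : SimpleGraph V} {A B : Finset V}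
    (h : Closed G A B) {v a : V} (hvB : v ∈ B) (hv : v ∉ A) (ha : a ∈ A) : ¬ G.Adj v a := by
  intro hadj
  have h1 := h.2 (insert v A) (Finset.ssubset_insert hv)
    (Finset.insert_subset hvB h.1)
  have h2 := delta_insert_le G hv ha hadj
  omega

lemma not_adj_of_closedIn [DecidableEq V] {G : SimpleGraph V} {A : Finset V}
    (h : ClosedIn G A) {v a : V} (hv : v ∉ A) (ha : a ∈ A) : ¬ G.Adj v a :=
  not_adj_of_closed (h (insert v A) (Finset.subset_insert _ _)) (Finset.mem_insert_self v A) hv ha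

lemma closedIn_of_isolated [DecidableEq V] {G : SimpleGraph V} (hG : G.IsAcyclic) {A : Finset V}
    (h : ∀ v ∉ A, ∀ a ∈ A, ¬ G.Adj v a) : ClosedIn G A := by
  intro B hAB
  refine ⟨hAB, fun C hAC hCB => ?_⟩
  have hC : C = A ∪ (C \ A) := by
    rw [Finset.union_sdiff_of_subset hAC.subset]
  have hdisj : Disjoint A (C \ A) := Finset.disjoint_sdiff
  have hcross : ∀ a ∈ A, ∀ b ∈ C \ A, ¬ G.Adj a b := by
    intro a ha b hb hadj
    exact h b (Finset.mem_sdiff.1 hb).2 a ha hadj.symm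
  have hne : (C \ A).Nonempty := by
    obtain ⟨x, hxC, hxA⟩ := Finset.exists_of_ssubset hAC
    exact ⟨x, Finset.mem_sdiff.2 ⟨hxC, hxA⟩⟩
  have := delta_pos_of_acyclic hG (C \ A) hne
  calc delta G A < delta G A + delta G (C \ A) := by omega
    _ = delta G C := by rw [← delta_union G A (C \ A) hdisj hcross, ← hC]

lemma delta_image [DecidableEq V] [DecidableEq V'] (G : SimpleGraph V) (G' : SimpleGraph V')
    (f : V → V') (S : Finset V) (hinj : Set.InjOn f (S : Set V))
    (hadj : ∀ a ∈ S, ∀ b ∈ S, (G.Adj a b ↔ G'.Adj (f a) (f b))) :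
    delta G' (S.image f) = delta G S := by
  have hsets : Es G' ((S.image f : Finset V') : Set V') = Sym2.map f '' Es G (S : Set V) := by
    ext e
    constructor
    · intro he
      induction e with
      | _ x y =>
        obtain ⟨hee, hev⟩ := he
        have hx := hev x (by simp); have hy := hev y (by simp)
        simp only [Finset.coe_image, Set.mem_image, Finset.mem_coe] at hx hy
        obtain ⟨a, haS, rfl⟩ := hx
        obtain ⟨b, hbS, rfl⟩ := hy
        rw [SimpleGraph.mem_edgeSet] at hee
        exact ⟨s(a, b), Es_pair_mem G ((hadj a haS b hbS).2 hee) haS hbS, by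
          rw [Sym2.map_pair_eq]⟩
    · rintro ⟨e', he', rfl⟩
      induction e' with
      | _ a b =>
        obtain ⟨hee, hev⟩ := he'
        have ha := hev a (by simp); have hb := hev b (by simp)
        rw [SimpleGraph.mem_edgeSet] at hee
        rw [Sym2.map_pair_eq]
        exact Es_pair_mem G' ((hadj a ha b hb).1 hee)
          (by simpa using ⟨a, ha, rfl⟩) (by simpa using ⟨b, hb, rfl⟩)
  have hinj2 : Set.InjOn (Sym2.map f) (Es G (S : Set V)) := by
    intro e₁ h₁ e₂ h₂ heq
    induction e₁ with
    | _ a b =>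
      induction e₂ with
      | _ c d =>
        have ha := h₁.2 a (by simp); have hb := h₁.2 b (by simp)
        have hc := h₂.2 c (by simp); have hd := h₂.2 d (by simp)
        rw [Sym2.map_pair_eq, Sym2.map_pair_eq, Sym2.eq_iff] at heq
        rw [Sym2.eq_iff]
        rcases heq with ⟨h1, h2⟩ | ⟨h1, h2⟩
        · exact Or.inl ⟨hinj ha hc h1, hinj hb hd h2⟩
        · exact Or.inr ⟨hinj ha hd h1, hinj hb hc h2⟩
  rw [delta_eq, delta_eq, hsets, Set.ncard_image_of_injOn hinj2,
    Finset.card_image_of_injOn hinj]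

lemma delta_empty (G : SimpleGraph V) : delta G (∅ : Finset V) = 0 := by
  have hEs : Es G ((∅ : Finset V) : Set V) = ∅ := by
    ext e
    induction e with
    | _ x y =>
      simp only [Set.mem_empty_iff_false, iff_false]
      rintro ⟨_, hv⟩
      simpa using hv x (by simp)
  rw [delta_eq, hEs]
  simp

/-- `N` disjoint copies of the induced subgraph of `H` on `T`. -/
def copies {W : Type*} (N : ℕ) (H : SimpleGraph W) (T : Finset W) :
    SimpleGraph (Fin N × {w // w ∈ T}) where
  Adj p q := p.1 = q.1 ∧ H.Adj p.2.1 q.2.1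
  symm := ⟨by rintro p q ⟨h1, h2⟩; exact ⟨h1.symm, h2.symm⟩⟩
  loopless := ⟨by rintro p ⟨h1, h2⟩; exact H.irrefl h2⟩

def copiesHom {W : Type*} (N : ℕ) (H : SimpleGraph W) (T : Finset W) :
    copies N H T →g H :=
  ⟨fun p => p.2.1, fun h => h.2⟩

lemma copies_fst_of_walk {W : Type*} {N : ℕ} {H : SimpleGraph W} {T : Finset W}
    {u v : Fin N × {w // w ∈ T}} (p : (copies N H T).Walk u v) :
    ∀ z ∈ p.support, z.1 = u.1 := by
  induction p with
  | nil => simp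
  | cons h q ih =>
    intro z hz
    rw [SimpleGraph.Walk.support_cons, List.mem_cons] at hz
    rcases hz with rfl | hz
    · rfl
    · exact (ih z hz).trans h.1.symm

lemma copies_path_map {W : Type*} {N : ℕ} {H : SimpleGraph W} {T : Finset W}
    {u v : Fin N × {w // w ∈ T}} (p : (copies N H T).Walk u v) (hp : p.IsPath) :
    (p.map (copiesHom N H T)).IsPath := by
  rw [SimpleGraph.Walk.isPath_def, SimpleGraph.Walk.support_map]
  refine List.Nodup.map_on ?_ hp.support_nodup
  intro z hz z' hz' heq
  have h1 := copies_fst_of_walk p z hz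
  have h2 := copies_fst_of_walk p z' hz'
  have : z.2 = z'.2 := Subtype.ext heq
  exact Prod.ext (h1.trans h2.symm) this

lemma copies_delta_pos {W : Type*} [DecidableEq W] {N : ℕ} {H : SimpleGraph W} {T : Finset W}
    (h1 : ∀ S : Finset W, S.Nonempty → 0 < delta H S) :
    ∀ (n : ℕ) (S : Finset (Fin N × {w // w ∈ T})), S.card ≤ n → S.Nonempty →
      0 < delta (copies N H T) S := by
  classical
  intro n
  induction n with
  | zero => intro S hle hne; simp [Finset.card_eq_zero.1 (Nat.le_zero.1 hle)] at hne
  | succ n ih =>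
    intro S hle hne
    obtain ⟨p₀, hp₀⟩ := hne
    set i := p₀.1 with hi
    set S₁ := S.filter (fun p => p.1 = i) with hS₁
    set S₂ := S.filter (fun p => ¬ p.1 = i) with hS₂
    have hunion : S₁ ∪ S₂ = S := Finset.filter_union_filter_not_eq _ S
    have hdisj : Disjoint S₁ S₂ := Finset.disjoint_filter_filter_not S S _
    have hcross : ∀ p ∈ S₁, ∀ q ∈ S₂, ¬ (copies N H T).Adj p q := by
      intro p hp q hq hadj
      have h1' := (Finset.mem_filter.1 hp).2
      have h2' := (Finset.mem_filter.1 hq).2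
      exact h2' (hadj.1 ▸ h1')
    have hd : delta (copies N H T) S = delta (copies N H T) S₁ + delta (copies N H T) S₂ := by
      rw [← hunion, delta_union _ _ _ hdisj hcross]
    have hS₁ne : S₁.Nonempty := ⟨p₀, Finset.mem_filter.2 ⟨hp₀, rfl⟩⟩
    have hS₁pos : 0 < delta (copies N H T) S₁ := by
      have himg := delta_image (copies N H T) H (fun p => p.2.1) S₁
        (by
          intro p hp q hq heq
          have h1' := (Finset.mem_filter.1 hp).2
          have h2' := (Finset.mem_filter.1 hq).2
          exact Prod.ext (h1'.trans h2'.symm) (Subtype.ext heq))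
        (by
          intro a ha b hb
          have h1' := (Finset.mem_filter.1 ha).2
          have h2' := (Finset.mem_filter.1 hb).2
          constructor
          · exact fun h => h.2
          · exact fun h => ⟨h1'.trans h2'.symm, h⟩)
      rw [← himg]
      exact h1 _ (hS₁ne.image _)
    rcases S₂.eq_empty_or_nonempty with h2e | h2ne
    · rw [hd, h2e, delta_empty]
      omega
    · have hcards : S₁.card + S₂.card = S.card := by
        rw [← Finset.card_union_of_disjoint hdisj, hunion]
      have h2pos := ih S₂ (by
        have := Finset.card_pos.2 hS₁ne
        omega) h2ne
      rw [hd]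
      omega

lemma inK_copies {W : Type*} [DecidableEq W] [Fintype W] {α : ℕ∞} {H : SimpleGraph W}
    (hH : InK α H Finset.univ) (N : ℕ) (T : Finset W) :
    InK α (copies N H T) Finset.univ := by
  classical
  constructor
  · intro S _ hne
    exact copies_delta_pos (fun S' h => hH.1 S' (Finset.subset_univ _) h) S.card S le_rfl hne
  · intro n hn
    have h2 := hH.2 n hn
    by_cases hn0 : n = 0
    · subst hn0
      rw [if_pos rfl] at h2 ⊢
      intro a _ s _ hsadj
      have hfst : ∀ p ∈ s, p.1 = a.1 := fun p hp => ((hsadj p hp).1).symm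
      have hinj : Set.InjOn (fun p : Fin N × {w // w ∈ T} => p.2.1) (s : Set _) := by
        intro p hp q hq heq
        exact Prod.ext ((hfst p hp).trans (hfst q hq).symm) (Subtype.ext heq)
      have hcard : (s.image (fun p => p.2.1)).card = s.card :=
        Finset.card_image_of_injOn hinj
      rw [← hcard]
      exact h2 a.2.1 (Finset.mem_univ _) _ (Finset.subset_univ _)
        (by rintro b hb
            rw [Finset.mem_image] at hb
            obtain ⟨p, hp, rfl⟩ := hb
            exact (hsadj p hp).2)
    · rw [if_neg hn0] at h2 ⊢
      rintro a _ ⟨s, _, hsadj, hscard⟩ ⟨y, p, hp, hlen, _⟩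
      have hfst : ∀ q ∈ s, q.1 = a.1 := fun q hq => ((hsadj q hq).1).symm
      have hinj : Set.InjOn (fun q : Fin N × {w // w ∈ T} => q.2.1) (s : Set _) := by
        intro q hq q' hq' heq
        exact Prod.ext ((hfst q hq).trans (hfst q' hq').symm) (Subtype.ext heq)
      refine h2 a.2.1 (Finset.mem_univ _) ⟨s.image (fun q => q.2.1), Finset.subset_univ _, ?_, ?_⟩
        ⟨y.2.1, p.map (copiesHom N H T), copies_path_map p hp, ?_, fun v _ => Finset.mem_univ v⟩
      · rintro b hb
        rw [Finset.mem_image] at hb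
        obtain ⟨q, hq, rfl⟩ := hb
        exact (hsadj q hq).2
      · rw [Finset.card_image_of_injOn hinj]; exact hscard
      · exact (SimpleGraph.Walk.length_map _ _).trans hlen

lemma inK_comap_equiv {U U' : Type*} [DecidableEq U] [DecidableEq U'] [Fintype U] [Fintype U']
    {α : ℕ∞} (e : U ≃ U') (G' : SimpleGraph U') (h : InK α G' Finset.univ) :
    InK α (G'.comap e) Finset.univ := by
  classical
  have hadj : ∀ a b : U, (G'.comap e).Adj a b ↔ G'.Adj (e a) (e b) := fun a b => Iff.rfl
  constructor
  · intro S _ hne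
    have himg := delta_image (G'.comap e) G' e S (e.injective.injOn)
      (fun a _ b _ => hadj a b)
    rw [← himg]
    exact h.1 _ (Finset.subset_univ _) (hne.image _)
  · intro n hn
    have h2 := h.2 n hn
    let hom : G'.comap e →g G' := ⟨e, fun hab => hab⟩
    by_cases hn0 : n = 0
    · subst hn0
      rw [if_pos rfl] at h2 ⊢
      intro a _ s _ hsadj
      rw [← Finset.card_image_of_injective s e.injective]
      refine h2 (e a) (Finset.mem_univ _) _ (Finset.subset_univ _) ?_
      rintro b hb
      rw [Finset.mem_image] at hb
      obtain ⟨q, hq, rfl⟩ := hb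
      exact hsadj q hq
    · rw [if_neg hn0] at h2 ⊢
      rintro a _ ⟨s, _, hsadj, hscard⟩ ⟨y, p, hp, hlen, _⟩
      refine h2 (e a) (Finset.mem_univ _)
        ⟨s.image e, Finset.subset_univ _, ?_, ?_⟩
        ⟨e y, p.map hom, SimpleGraph.Walk.map_isPath_of_injective e.injective hp, ?_,
          fun v _ => Finset.mem_univ v⟩
      · rintro b hb
        rw [Finset.mem_image] at hb
        obtain ⟨q, hq, rfl⟩ := hb
        exact hsadj q hq
      · rw [Finset.card_image_of_injective s e.injective]; exact hscard
      · rw [SimpleGraph.Walk.length_map]; exact hlen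

end Helpers

/-- Let `α ∈ ω+1`, let `M` be a model of `Univ_α`, let `A` be a finite
set of vertices of `M` with `A ≤* M`, and let `B ∈ K_α` be a finite graph containing
`A` (as an induced subgraph, via `j`) with `A ≤* B`. Then there is an embedding `f`
of `B` into `M` fixing `A` pointwise whose image is closed in `M`. (In particular,
every model of `Univ_α` is ultra-homogeneous.) -/
theorem stmt_18 {V : Type*} [DecidableEq V] (α : ℕ∞) (G : SimpleGraph V)
    (hM : ModelsUniv α G) (A : Finset V) (hA : ClosedIn G A)
    (W : Type*) [Fintype W] [DecidableEq W] (H : SimpleGraph W)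
    (hH : InK α H Finset.univ)
    (j : V → W) (hj : Set.InjOn j (A : Set V))
    (hjadj : ∀ a a' : V, a ∈ A → a' ∈ A → (G.Adj a a' ↔ H.Adj (j a) (j a')))
    (hjclosed : Closed H (A.image j) Finset.univ) :
    ∃ f : W → V, Function.Injective f ∧
      (∀ a ∈ A, f (j a) = a) ∧
      (∀ u v : W, H.Adj u v ↔ G.Adj (f u) (f v)) ∧
      ClosedIn G (Finset.univ.image f) := by
  classical
  obtain ⟨hacy, -, hax⟩ := hM
  set JA := A.image j with hJA
  set T : Finset W := Finset.univ \ JA with hT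
  have hTmem : ∀ w : W, w ∈ T ↔ w ∉ JA := by
    intro w; simp [hT]
  set N := A.card + 1 with hN
  set CP := copies N H T with hCPdef
  have hCPK : InK α CP Finset.univ := inK_copies hH N T
  set k := Fintype.card (Fin N × {w // w ∈ T}) with hk
  set eqv : Fin k ≃ (Fin N × {w // w ∈ T}) := (Fintype.equivFin _).symm with heqv
  have hK2 : InK α (CP.comap eqv) Finset.univ := inK_comap_equiv eqv CP hCPK
  obtain ⟨g, hginj, hgadj, hgiso⟩ := hax k (CP.comap eqv) hK2
  set φ : Fin N → {w // w ∈ T} → V := fun i x => g (eqv.symm (i, x)) with hφ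
  have hφinj : ∀ i i' x x', φ i x = φ i' x' → i = i' ∧ x = x' := by
    intro i i' x x' h
    have h2 := eqv.symm.injective (hginj h)
    exact ⟨(Prod.ext_iff.1 h2).1, (Prod.ext_iff.1 h2).2⟩
  have hpigeon : ∃ i : Fin N, ∀ x, φ i x ∉ A := by
    by_contra hcon
    push_neg at hcon
    choose x hx using hcon
    have hinj : Function.Injective (fun i => φ i (x i)) := by
      intro i i' h
      exact (hφinj _ _ _ _ h).1
    have hle := Finset.card_le_card_of_injOn (s := (Finset.univ : Finset (Fin N)))
      (t := A) (fun i => φ i (x i)) (fun i _ => hx i) hinj.injOn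
    rw [Finset.card_univ, Fintype.card_fin] at hle
    omega
  obtain ⟨i₀, hi₀⟩ := hpigeon
  set f : W → V := fun w =>
    if h : w ∈ JA then (Finset.mem_image.1 h).choose
    else φ i₀ ⟨w, (hTmem w).2 h⟩ with hfdef
  have hfJ : ∀ w, ∀ h : w ∈ JA, f w ∈ A ∧ j (f w) = w := by
    intro w h
    have hfw : f w = (Finset.mem_image.1 h).choose := by
      simp only [hfdef, dif_pos h]
    obtain ⟨h1, h2⟩ := (Finset.mem_image.1 h).choose_spec
    rw [hfw]
    exact ⟨h1, h2⟩
  have hfT : ∀ w, ∀ h : w ∉ JA, f w = φ i₀ ⟨w, (hTmem w).2 h⟩ := by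
    intro w h
    simp only [hfdef, dif_neg h]
  have hfix : ∀ a ∈ A, f (j a) = a := by
    intro a ha
    have hmem : j a ∈ JA := Finset.mem_image_of_mem j ha
    obtain ⟨h1, h2⟩ := hfJ (j a) hmem
    exact hj (Finset.mem_coe.2 h1) (Finset.mem_coe.2 ha) h2
  have hAsub : ∀ a ∈ A, a ∈ Finset.univ.image f := fun a ha =>
    Finset.mem_image.2 ⟨j a, Finset.mem_univ _, hfix a ha⟩
  have hfTnotA : ∀ w, ∀ h : w ∉ JA, f w ∉ A := by
    intro w h
    rw [hfT w h]
    exact hi₀ _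
  have hadjT : ∀ (u v : W) (hu : u ∉ JA) (hv : v ∉ JA),
      (H.Adj u v ↔ G.Adj (f u) (f v)) := by
    intro u v hu hv
    rw [hfT u hu, hfT v hv]
    constructor
    · intro h
      have hcp : CP.Adj (i₀, ⟨u, (hTmem u).2 hu⟩) (i₀, ⟨v, (hTmem v).2 hv⟩) := ⟨rfl, h⟩
      have h2 : (CP.comap eqv).Adj (eqv.symm (i₀, ⟨u, (hTmem u).2 hu⟩))
          (eqv.symm (i₀, ⟨v, (hTmem v).2 hv⟩)) := by
        show CP.Adj (eqv (eqv.symm _)) (eqv (eqv.symm _))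
        rwa [Equiv.apply_symm_apply, Equiv.apply_symm_apply]
      exact (hgadj _ _).1 h2
    · intro h
      have h2 := (hgadj _ _).2 h
      have h3 : CP.Adj (eqv (eqv.symm (i₀, ⟨u, (hTmem u).2 hu⟩)))
          (eqv (eqv.symm (i₀, ⟨v, (hTmem v).2 hv⟩))) := h2
      rw [Equiv.apply_symm_apply, Equiv.apply_symm_apply] at h3
      exact h3.2
  have hadj2 : ∀ u v : W, H.Adj u v ↔ G.Adj (f u) (f v) := by
    intro u v
    by_cases hu : u ∈ JA <;> by_cases hv : v ∈ JA
    · obtain ⟨hu1, hu2⟩ := hfJ u hu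
      obtain ⟨hv1, hv2⟩ := hfJ v hv
      constructor
      · intro h
        exact (hjadj _ _ hu1 hv1).2 (by rwa [hu2, hv2])
      · intro h
        have := (hjadj _ _ hu1 hv1).1 h
        rwa [hu2, hv2] at this
    · have hH1 : ¬ H.Adj u v := fun hadj =>
        (not_adj_of_closed hjclosed (Finset.mem_univ v) hv hu) hadj.symm
      have hG1 : ¬ G.Adj (f u) (f v) := fun hadj =>
        (not_adj_of_closedIn hA (hfTnotA v hv) (hfJ u hu).1) hadj.symm
      simp [hH1, hG1]
    · have hH1 : ¬ H.Adj u v := fun hadj =>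
        (not_adj_of_closed hjclosed (Finset.mem_univ u) hu hv) hadj
      have hG1 : ¬ G.Adj (f u) (f v) := fun hadj =>
        (not_adj_of_closedIn hA (hfTnotA u hu) (hfJ v hv).1) hadj
      simp [hH1, hG1]
    · exact hadjT u v hu hv
  have hfinj : Function.Injective f := by
    intro u v h
    by_cases hu : u ∈ JA <;> by_cases hv : v ∈ JA
    · obtain ⟨hu1, hu2⟩ := hfJ u hu
      obtain ⟨hv1, hv2⟩ := hfJ v hv
      rw [← hu2, ← hv2, h]
    · exact absurd (h ▸ (hfJ u hu).1) (hfTnotA v hv)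
    · exact absurd (h.symm ▸ (hfJ v hv).1) (hfTnotA u hu)
    · rw [hfT u hu, hfT v hv] at h
      exact congrArg Subtype.val (hφinj _ _ _ _ h).2
  refine ⟨f, hfinj, hfix, hadj2, ?_⟩
  apply closedIn_of_isolated hacy
  intro v hv u hu
  rw [Finset.mem_image] at hu
  obtain ⟨w, -, rfl⟩ := hu
  by_cases hw : w ∈ JA
  · have hvA : v ∉ A := fun hvA => hv (hAsub v hvA)
    exact not_adj_of_closedIn hA hvA (hfJ w hw).1
  · rw [hfT w hw]
    by_cases hvr : v ∈ Set.range g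
    · obtain ⟨z', rfl⟩ := hvr
      intro hadj
      have hH2 : (CP.comap eqv).Adj (eqv.symm (i₀, ⟨w, (hTmem w).2 hw⟩)) z' :=
        (hgadj _ z').2 hadj.symm
      have hcp : CP.Adj (eqv (eqv.symm (i₀, ⟨w, (hTmem w).2 hw⟩))) (eqv z') := hH2
      rw [Equiv.apply_symm_apply] at hcp
      have hfst : i₀ = (eqv z').1 := hcp.1
      apply hv
      have hw' : ((eqv z').2 : W) ∉ JA := (hTmem _).1 (eqv z').2.2
      have hval : f ((eqv z').2 : W) = g z' := by
        rw [hfT _ hw']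
        show g (eqv.symm (i₀, ⟨((eqv z').2 : W), _⟩)) = g z'
        congr 1
        rw [hfst]
        have hpair : (((eqv z').1, (⟨((eqv z').2 : W), (eqv z').2.2⟩ : {w // w ∈ T})))
            = eqv z' := by
          exact Prod.ext rfl (Subtype.ext rfl)
        rw [hpair, Equiv.symm_apply_apply]
      rw [← hval]
      exact Finset.mem_image.2 ⟨_, Finset.mem_univ _, rfl⟩
    · exact fun hadj => hgiso v hvr (eqv.symm (i₀, ⟨w, (hTmem w).2 hw⟩)) hadj.symm
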